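/- Let A ∈ ASM(n) and define biGr(A) to be the set of maximal elements (with respect to the Bruhat order) of the set of biGrassmannian permutations u ∈ S_n with u ≤ A. Then biGr(A) = {[i, j, r_A(i,j)]_b : (i,j) ∈ Ess(A)}. -/

import Mathlib

/-- The entry of an `n × n` integer matrix in 1-based coordinates;
`0` outside the grid `[1,n] × [1,n]`. -/
def entry1 {n : ℕ} (A : Matrix (Fin n) (Fin n) ℤ) (i j : ℕ) : ℤ :=
  if h : 1 ≤ i ∧ i ≤ n ∧ 1 ≤ j ∧ j ≤ n then
    A ⟨i - 1, by omega⟩ ⟨j - 1, by omega⟩ else 0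

/-- The corner sum `r_A(i,j) = ∑_{k ≤ i} ∑_{l ≤ j} a_{k l}` (1-based). -/
def cornerSum {n : ℕ} (A : Matrix (Fin n) (Fin n) ℤ) (i j : ℕ) : ℤ :=
  ∑ k ∈ Finset.Icc 1 i, ∑ l ∈ Finset.Icc 1 j, entry1 A k l

/-- Partial row sum `∑_{l=1}^{j} a_{i l}`. -/
def rowPartial {n : ℕ} (A : Matrix (Fin n) (Fin n) ℤ) (i j : ℕ) : ℤ :=
  ∑ l ∈ Finset.Icc 1 j, entry1 A i l

/-- Partial column sum `∑_{k=1}^{i} a_{k j}`. -/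
def colPartial {n : ℕ} (A : Matrix (Fin n) (Fin n) ℤ) (i j : ℕ) : ℤ :=
  ∑ k ∈ Finset.Icc 1 i, entry1 A k j

/-- `A` is an alternating sign matrix: every partial row and column sum is `0`
or `1`, and every full row and column sums to `1`. -/
def IsASM {n : ℕ} (A : Matrix (Fin n) (Fin n) ℤ) : Prop :=
  (∀ i j : ℕ, rowPartial A i j = 0 ∨ rowPartial A i j = 1) ∧
  (∀ i j : ℕ, colPartial A i j = 0 ∨ colPartial A i j = 1) ∧
  (∀ i : ℕ, 1 ≤ i → i ≤ n → rowPartial A i n = 1) ∧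
  (∀ j : ℕ, 1 ≤ j → j ≤ n → colPartial A n j = 1)

/-- `A` is a partial alternating sign matrix: every partial row and column sum
is `0` or `1`. -/
def IsPartialASM {n : ℕ} (A : Matrix (Fin n) (Fin n) ℤ) : Prop :=
  (∀ i j : ℕ, rowPartial A i j = 0 ∨ rowPartial A i j = 1) ∧
  (∀ i j : ℕ, colPartial A i j = 0 ∨ colPartial A i j = 1)

/-- `(i,j)` (1-based) is in the Rothe diagram `D(A)`:
`∑_{k > i, l > j} a_{i l} a_{k j} = 1`. -/
def InDiagram {n : ℕ} (A : Matrix (Fin n) (Fin n) ℤ) (i j : ℕ) : Prop :=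
  (∑ k ∈ Finset.Icc 1 n, ∑ l ∈ Finset.Icc 1 n,
    (if i < k ∧ j < l then entry1 A i l * entry1 A k j else 0)) = 1

/-- `(i,j)` is in the essential set `Ess(A)`. -/
def InEss {n : ℕ} (A : Matrix (Fin n) (Fin n) ℤ) (i j : ℕ) : Prop :=
  InDiagram A i j ∧ ¬ InDiagram A (i + 1) j ∧ ¬ InDiagram A i (j + 1)

/-- The permutation matrix of `w` (a `1` in positions `(a, w a)`). -/
def permMatrix {n : ℕ} (w : Equiv.Perm (Fin n)) : Matrix (Fin n) (Fin n) ℤ :=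
  Matrix.of fun a b => if w a = b then 1 else 0

/-- The value `w(a)` of the permutation `w` in 1-based coordinates, extended by
the identity outside `[1,n]`. -/
def pval {n : ℕ} (w : Equiv.Perm (Fin n)) (a : ℕ) : ℕ :=
  if h : 1 ≤ a ∧ a ≤ n then ((w ⟨a - 1, by omega⟩ : Fin n) : ℕ) + 1 else a

/-- The value function (1-based) of the biGrassmannian permutation `[i,j,r]_b`. -/
def biGrFun (i j r a : ℕ) : ℕ :=
  if a ≤ r then a
  else if a ≤ i then a + (j - r)
  else if a ≤ i + j - r then a - (i - r)
  else a

/-- The permutation matrix of the biGrassmannian permutation `[i,j,r]_b ∈ S_n`. -/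
def biGrMatrix (n i j r : ℕ) : Matrix (Fin n) (Fin n) ℤ :=
  Matrix.of fun a b => if biGrFun i j r ((a : ℕ) + 1) = (b : ℕ) + 1 then 1 else 0

/-- `u ∈ S_n` is the biGrassmannian permutation `[i,j,r]_b`, i.e. its values
are given by the defining formula. -/
def IsBiGrPerm (n i j r : ℕ) (u : Equiv.Perm (Fin n)) : Prop :=
  ∀ a : ℕ, 1 ≤ a → a ≤ n → pval u a = biGrFun i j r a

/-- `(a,b)` (1-based) is in the Rothe diagram of the permutation `w`:
`w(a) > b` and `w⁻¹(b) > a`. -/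
def InPermDiagram {n : ℕ} (w : Equiv.Perm (Fin n)) (a b : ℕ) : Prop :=
  1 ≤ a ∧ a ≤ n ∧ 1 ≤ b ∧ b ≤ n ∧ b < pval w a ∧ a < pval w⁻¹ b

/-- `(a,b)` is in the essential set of the permutation `w`. -/
def InPermEss {n : ℕ} (w : Equiv.Perm (Fin n)) (a b : ℕ) : Prop :=
  InPermDiagram w a b ∧ ¬ InPermDiagram w (a + 1) b ∧ ¬ InPermDiagram w a (b + 1)

/-- `w` has a descent at (1-based) position `d`: `w(d) > w(d+1)`. -/
def HasDescentAt {n : ℕ} (w : Equiv.Perm (Fin n)) (d : ℕ) : Prop :=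
  1 ≤ d ∧ d < n ∧ pval w (d + 1) < pval w d

/-- `u` is biGrassmannian: both `u` and `u⁻¹` have a unique descent. -/
def IsBiGrassmannian {n : ℕ} (u : Equiv.Perm (Fin n)) : Prop :=
  (∃! d : ℕ, HasDescentAt u d) ∧ (∃! d : ℕ, HasDescentAt u⁻¹ d)

/-- `u ≤ v` in Bruhat order: `r_u ≥ r_v` entrywise. -/
def BruhatLE {n : ℕ} (u v : Equiv.Perm (Fin n)) : Prop :=
  ∀ a b : ℕ, cornerSum (permMatrix v) a b ≤ cornerSum (permMatrix u) a b

/-- `u ≤ A` in the ASM order: `r_u ≥ r_A` entrywise. -/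
def PermLEASM {n : ℕ} (u : Equiv.Perm (Fin n))
    (A : Matrix (Fin n) (Fin n) ℤ) : Prop :=
  ∀ a b : ℕ, cornerSum A a b ≤ cornerSum (permMatrix u) a b

section Infra

variable {n : ℕ}

lemma entry1_zero_of_left {A : Matrix (Fin n) (Fin n) ℤ} {i : ℕ} (h : ¬(1 ≤ i ∧ i ≤ n)) (j : ℕ) :
    entry1 A i j = 0 := by
  unfold entry1; rw [dif_neg]; tauto

lemma entry1_zero_of_right {A : Matrix (Fin n) (Fin n) ℤ} (i : ℕ) {j : ℕ} (h : ¬(1 ≤ j ∧ j ≤ n)) :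
    entry1 A i j = 0 := by
  unfold entry1; rw [dif_neg]; tauto

lemma cornerSum_eq_sum_row (A : Matrix (Fin n) (Fin n) ℤ) (a b : ℕ) :
    cornerSum A a b = ∑ k ∈ Finset.Icc 1 a, rowPartial A k b := rfl

lemma cornerSum_eq_sum_col (A : Matrix (Fin n) (Fin n) ℤ) (a b : ℕ) :
    cornerSum A a b = ∑ l ∈ Finset.Icc 1 b, colPartial A a l := by
  unfold cornerSum colPartial; rw [Finset.sum_comm]

lemma cornerSum_succ_row (A : Matrix (Fin n) (Fin n) ℤ) (a b : ℕ) :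
    cornerSum A (a + 1) b = cornerSum A a b + rowPartial A (a + 1) b := by
  rw [cornerSum_eq_sum_row, cornerSum_eq_sum_row, Finset.sum_Icc_succ_top (by omega)]

lemma cornerSum_succ_col (A : Matrix (Fin n) (Fin n) ℤ) (a b : ℕ) :
    cornerSum A a (b + 1) = cornerSum A a b + colPartial A a (b + 1) := by
  rw [cornerSum_eq_sum_col, cornerSum_eq_sum_col, Finset.sum_Icc_succ_top (by omega)]

lemma cornerSum_zero_row (A : Matrix (Fin n) (Fin n) ℤ) (b : ℕ) : cornerSum A 0 b = 0 := by
  unfold cornerSum; simp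

lemma cornerSum_zero_col (A : Matrix (Fin n) (Fin n) ℤ) (a : ℕ) : cornerSum A a 0 = 0 := by
  rw [cornerSum_eq_sum_col]; simp

lemma rowPartial_zero_of (A : Matrix (Fin n) (Fin n) ℤ) {i : ℕ} (h : ¬(1 ≤ i ∧ i ≤ n)) (j : ℕ) :
    rowPartial A i j = 0 := by
  unfold rowPartial
  exact Finset.sum_eq_zero fun l _ => entry1_zero_of_left h l

lemma colPartial_zero_of (A : Matrix (Fin n) (Fin n) ℤ) (i : ℕ) {j : ℕ} (h : ¬(1 ≤ j ∧ j ≤ n)) :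
    colPartial A i j = 0 := by
  unfold colPartial
  exact Finset.sum_eq_zero fun l _ => entry1_zero_of_right l h

lemma rowPartial_stab (A : Matrix (Fin n) (Fin n) ℤ) (i : ℕ) {j : ℕ} (h : n ≤ j) :
    rowPartial A i j = rowPartial A i n := by
  unfold rowPartial
  rw [← Finset.sum_subset (Finset.Icc_subset_Icc_right h)]
  intro x _ hx
  simp only [Finset.mem_Icc] at hx
  exact entry1_zero_of_right i (by omega)

lemma colPartial_stab (A : Matrix (Fin n) (Fin n) ℤ) {i : ℕ} (h : n ≤ i) (j : ℕ) :
    colPartial A i j = colPartial A n j := by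
  unfold colPartial
  rw [← Finset.sum_subset (Finset.Icc_subset_Icc_right h)]
  intro x _ hx
  simp only [Finset.mem_Icc] at hx
  exact entry1_zero_of_left (by omega) j

lemma cornerSum_stab_row (A : Matrix (Fin n) (Fin n) ℤ) {a : ℕ} (h : n ≤ a) (b : ℕ) :
    cornerSum A a b = cornerSum A n b := by
  rw [cornerSum_eq_sum_row, cornerSum_eq_sum_row,
    ← Finset.sum_subset (Finset.Icc_subset_Icc_right h)]
  intro x _ hx
  simp only [Finset.mem_Icc] at hx
  exact rowPartial_zero_of A (by omega) b

lemma cornerSum_stab_col (A : Matrix (Fin n) (Fin n) ℤ) (a : ℕ) {b : ℕ} (h : n ≤ b) :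
    cornerSum A a b = cornerSum A a n := by
  rw [cornerSum_eq_sum_col, cornerSum_eq_sum_col,
    ← Finset.sum_subset (Finset.Icc_subset_Icc_right h)]
  intro x _ hx
  simp only [Finset.mem_Icc] at hx
  exact colPartial_zero_of A a (by omega)

end Infra

section Lip

variable {n : ℕ} {A : Matrix (Fin n) (Fin n) ℤ}

lemma cs_mono_row (hr : ∀ i j : ℕ, rowPartial A i j = 0 ∨ rowPartial A i j = 1)
    {a a' : ℕ} (h : a ≤ a') (b : ℕ) : cornerSum A a b ≤ cornerSum A a' b := by
  induction a' with
  | zero =>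
    have : a = 0 := by omega
    rw [this]
  | succ m ih =>
    rcases Nat.lt_or_ge a (m+1) with h' | h'
    · rw [cornerSum_succ_row]
      rcases hr (m+1) b with h2 | h2 <;> rw [h2] <;> have := ih (by omega) <;> omega
    · have : a = m + 1 := by omega
      rw [this]

lemma cs_step_row (hr : ∀ i j : ℕ, rowPartial A i j = 0 ∨ rowPartial A i j = 1)
    (a b : ℕ) : cornerSum A (a + 1) b ≤ cornerSum A a b + 1 := by
  rw [cornerSum_succ_row]
  rcases hr (a+1) b with h2 | h2 <;> rw [h2] <;> omega

lemma cs_mono_col (hc : ∀ i j : ℕ, colPartial A i j = 0 ∨ colPartial A i j = 1)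
    (a : ℕ) {b b' : ℕ} (h : b ≤ b') : cornerSum A a b ≤ cornerSum A a b' := by
  induction b' with
  | zero =>
    have : b = 0 := by omega
    rw [this]
  | succ m ih =>
    rcases Nat.lt_or_ge b (m+1) with h' | h'
    · rw [cornerSum_succ_col]
      rcases hc a (m+1) with h2 | h2 <;> rw [h2] <;> have := ih (by omega) <;> omega
    · have : b = m + 1 := by omega
      rw [this]

lemma cs_step_col (hc : ∀ i j : ℕ, colPartial A i j = 0 ∨ colPartial A i j = 1)
    (a b : ℕ) : cornerSum A a (b + 1) ≤ cornerSum A a b + 1 := by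
  rw [cornerSum_succ_col]
  rcases hc a (b+1) with h2 | h2 <;> rw [h2] <;> omega

lemma cs_nonneg (hr : ∀ i j : ℕ, rowPartial A i j = 0 ∨ rowPartial A i j = 1)
    (a b : ℕ) : 0 ≤ cornerSum A a b := by
  have := cs_mono_row hr (Nat.zero_le a) b
  rw [cornerSum_zero_row] at this; exact this

lemma cs_le_row (hr : ∀ i j : ℕ, rowPartial A i j = 0 ∨ rowPartial A i j = 1)
    (a b : ℕ) : cornerSum A a b ≤ (a : ℤ) := by
  induction a with
  | zero => rw [cornerSum_zero_row]; simp
  | succ m ih =>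
    have := cs_step_row hr m b
    push_cast
    omega

lemma cs_le_col (hc : ∀ i j : ℕ, colPartial A i j = 0 ∨ colPartial A i j = 1)
    (a b : ℕ) : cornerSum A a b ≤ (b : ℤ) := by
  induction b with
  | zero => rw [cornerSum_zero_col]; simp
  | succ m ih =>
    have := cs_step_col hc a m
    push_cast
    omega

/-- Full Lipschitz bound. -/
lemma cs_lip (hr : ∀ i j : ℕ, rowPartial A i j = 0 ∨ rowPartial A i j = 1)
    (hc : ∀ i j : ℕ, colPartial A i j = 0 ∨ colPartial A i j = 1)
    (a b a' b' : ℕ) :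
    cornerSum A a b ≤ cornerSum A a' b' + ((a - a' : ℕ) : ℤ) + ((b - b' : ℕ) : ℤ) := by
  have key : ∀ t a b : ℕ, cornerSum A (a + t) b ≤ cornerSum A a b + (t : ℤ) := by
    intro t
    induction t with
    | zero => intro a b; simp
    | succ m ih =>
      intro a b
      have h1 := cs_step_row hr (a + m) b
      have h2 := ih a b
      have h3 : a + (m+1) = (a + m) + 1 := by omega
      rw [h3]
      have h4 : ((m : ℤ) + 1) = (((m+1 : ℕ)) : ℤ) := by push_cast; ring
      push_cast
      omega
  have key2 : ∀ t a b : ℕ, cornerSum A a (b + t) ≤ cornerSum A a b + (t : ℤ) := by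
    intro t
    induction t with
    | zero => intro a b; simp
    | succ m ih =>
      intro a b
      have h1 := cs_step_col hc a (b + m)
      have h2 := ih a b
      have h3 : b + (m+1) = (b + m) + 1 := by omega
      rw [h3]
      push_cast
      omega
  have h1 : cornerSum A a b ≤ cornerSum A (a' + (a - a')) (b' + (b - b')) := by
    exact le_trans (cs_mono_row hr (show a ≤ a' + (a - a') by omega) b)
      (cs_mono_col hc _ (show b ≤ b' + (b - b') by omega))
  calc cornerSum A a b ≤ cornerSum A (a' + (a - a')) (b' + (b - b')) := h1
    _ ≤ cornerSum A (a' + (a - a')) b' + ((b - b' : ℕ) : ℤ) := key2 _ _ _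
    _ ≤ cornerSum A a' b' + ((a - a' : ℕ) : ℤ) + ((b - b' : ℕ) : ℤ) := by
        have := key (a - a') a' b'
        omega

/-- For an honest ASM : full row sums. -/
lemma cs_full_row (hA : IsASM A) {a : ℕ} (ha : a ≤ n) : cornerSum A a n = (a : ℤ) := by
  rw [cornerSum_eq_sum_row]
  have : ∀ k ∈ Finset.Icc 1 a, rowPartial A k n = 1 := by
    intro k hk
    simp only [Finset.mem_Icc] at hk
    exact hA.2.2.1 k hk.1 (by omega)
  rw [Finset.sum_congr rfl this, Finset.sum_const, Nat.card_Icc]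
  simp

lemma cs_full_col (hA : IsASM A) {b : ℕ} (hb : b ≤ n) : cornerSum A n b = (b : ℤ) := by
  rw [cornerSum_eq_sum_col]
  have : ∀ k ∈ Finset.Icc 1 b, colPartial A n k = 1 := by
    intro k hk
    simp only [Finset.mem_Icc] at hk
    exact hA.2.2.2 k hk.1 (by omega)
  rw [Finset.sum_congr rfl this, Finset.sum_const, Nat.card_Icc]
  simp

lemma cs_lower (hA : IsASM A) {a b : ℕ} (ha : a ≤ n) (hb : b ≤ n) :
    (a : ℤ) + b - n ≤ cornerSum A a b := by
  have h1 := cs_lip hA.1 hA.2.1 a n a b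
  rw [cs_full_row hA ha] at h1
  have : ((n - b : ℕ) : ℤ) = (n : ℤ) - b := by omega
  omega

end Lip

section Perm

variable {n : ℕ}

lemma pval_bounds (u : Equiv.Perm (Fin n)) {a : ℕ} (h1 : 1 ≤ a) (h2 : a ≤ n) :
    1 ≤ pval u a ∧ pval u a ≤ n := by
  unfold pval
  rw [dif_pos ⟨h1, h2⟩]
  have := (u ⟨a - 1, by omega⟩).isLt
  omega

lemma pval_def (u : Equiv.Perm (Fin n)) {a : ℕ} (h1 : 1 ≤ a) (h2 : a ≤ n) :
    pval u a = (u ⟨a - 1, by omega⟩ : ℕ) + 1 := by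
  unfold pval; rw [dif_pos ⟨h1, h2⟩]

lemma pval_inv_pval (u : Equiv.Perm (Fin n)) {a : ℕ} (h1 : 1 ≤ a) (h2 : a ≤ n) :
    pval u⁻¹ (pval u a) = a := by
  rw [pval_def u h1 h2]
  have hlt := (u ⟨a - 1, by omega⟩).isLt
  rw [pval_def u⁻¹ (by omega) (by omega)]
  simp only [Nat.add_sub_cancel, Fin.eta, Equiv.Perm.coe_inv, Equiv.symm_apply_apply]
  omega

lemma pval_pval_inv (u : Equiv.Perm (Fin n)) {b : ℕ} (h1 : 1 ≤ b) (h2 : b ≤ n) :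
    pval u (pval u⁻¹ b) = b := by
  have := pval_inv_pval u⁻¹ h1 h2
  simpa using this

lemma pval_injOn (u : Equiv.Perm (Fin n)) {a a' : ℕ} (h1 : 1 ≤ a) (h2 : a ≤ n)
    (h1' : 1 ≤ a') (h2' : a' ≤ n) (h : pval u a = pval u a') : a = a' := by
  have := pval_inv_pval u h1 h2
  have h2 := pval_inv_pval u h1' h2'
  rw [h] at this
  omega

lemma entry1_perm (u : Equiv.Perm (Fin n)) (i l : ℕ) :
    entry1 (permMatrix u) i l = if 1 ≤ i ∧ i ≤ n ∧ pval u i = l then 1 else 0 := by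
  by_cases h : 1 ≤ i ∧ i ≤ n ∧ 1 ≤ l ∧ l ≤ n
  · unfold entry1 permMatrix pval
    rw [dif_pos h, dif_pos ⟨h.1, h.2.1⟩]
    obtain ⟨hi1, hi2, hl1, hl2⟩ := h
    simp only [Matrix.of_apply]
    have hlt := (u ⟨i - 1, by omega⟩).isLt
    by_cases he : (u ⟨i - 1, by omega⟩ : ℕ) + 1 = l
    · rw [if_pos, if_pos ⟨hi1, hi2, he⟩]
      apply Fin.ext; simp; omega
    · rw [if_neg, if_neg (by tauto)]
      intro hc
      apply he
      have : (u ⟨i - 1, by omega⟩ : ℕ) = l - 1 := congrArg Fin.val hc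
      omega
  · rw [entry1]
    rw [dif_neg h]
    by_cases hi : 1 ≤ i ∧ i ≤ n
    · have hb := pval_bounds u hi.1 hi.2
      rw [if_neg]
      rintro ⟨_, _, hv⟩
      exact h ⟨hi.1, hi.2, by omega, by omega⟩
    · rw [if_neg (by tauto)]

lemma rowPartial_perm (u : Equiv.Perm (Fin n)) (i j : ℕ) :
    rowPartial (permMatrix u) i j = if 1 ≤ i ∧ i ≤ n ∧ pval u i ≤ j then 1 else 0 := by
  unfold rowPartial
  by_cases hi : 1 ≤ i ∧ i ≤ n
  · have hb := pval_bounds u hi.1 hi.2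
    have hrw : ∀ l ∈ Finset.Icc 1 j, entry1 (permMatrix u) i l
        = if pval u i = l then (1 : ℤ) else 0 := by
      intro l _
      rw [entry1_perm]
      by_cases he : pval u i = l
      · rw [if_pos he, if_pos ⟨hi.1, hi.2, he⟩]
      · rw [if_neg he, if_neg (by tauto)]
    rw [Finset.sum_congr rfl hrw, Finset.sum_ite_eq]
    simp only [Finset.mem_Icc]
    by_cases hle : pval u i ≤ j
    · rw [if_pos ⟨hb.1, hle⟩, if_pos ⟨hi.1, hi.2, hle⟩]
    · rw [if_neg (by tauto), if_neg (by tauto)]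
  · rw [if_neg (by tauto)]
    exact Finset.sum_eq_zero fun l _ => by
      rw [entry1_perm, if_neg (by tauto)]

lemma colPartial_perm (u : Equiv.Perm (Fin n)) (i j : ℕ) :
    colPartial (permMatrix u) i j = if 1 ≤ j ∧ j ≤ n ∧ pval u⁻¹ j ≤ i then 1 else 0 := by
  unfold colPartial
  by_cases hj : 1 ≤ j ∧ j ≤ n
  · have hb := pval_bounds u⁻¹ hj.1 hj.2
    have hrw : ∀ k ∈ Finset.Icc 1 i, entry1 (permMatrix u) k j
        = if pval u⁻¹ j = k then (1 : ℤ) else 0 := by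
      intro k _
      rw [entry1_perm]
      by_cases he : pval u⁻¹ j = k
      · have hk : 1 ≤ k ∧ k ≤ n := by omega
        rw [if_pos he, if_pos ⟨hk.1, hk.2, by rw [← he, pval_pval_inv u hj.1 hj.2]⟩]
      · rw [if_neg he, if_neg]
        rintro ⟨hk1, hk2, hv⟩
        exact he (by rw [← hv, pval_inv_pval u hk1 hk2])
    rw [Finset.sum_congr rfl hrw, Finset.sum_ite_eq]
    simp only [Finset.mem_Icc]
    by_cases hle : pval u⁻¹ j ≤ i
    · rw [if_pos ⟨hb.1, hle⟩, if_pos ⟨hj.1, hj.2, hle⟩]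
    · rw [if_neg (by tauto), if_neg (by tauto)]
  · rw [if_neg (by tauto)]
    refine Finset.sum_eq_zero fun k _ => ?_
    rw [entry1_perm, if_neg]
    rintro ⟨hk1, hk2, hv⟩
    have := pval_bounds u hk1 hk2
    omega

lemma isASM_perm (u : Equiv.Perm (Fin n)) : IsASM (permMatrix u) := by
  refine ⟨fun i j => ?_, fun i j => ?_, fun i h1 h2 => ?_, fun j h1 h2 => ?_⟩
  · rw [rowPartial_perm]; split_ifs <;> simp
  · rw [colPartial_perm]; split_ifs <;> simp
  · rw [rowPartial_perm, if_pos ⟨h1, h2, (pval_bounds u h1 h2).2⟩]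
  · rw [colPartial_perm, if_pos ⟨h1, h2, (pval_bounds u⁻¹ h1 h2).2⟩]

/-- Corner sum of a biGrassmannian permutation: closed formula (for `a ≤ n`). -/
lemma cs_biGr {i j r : ℕ} (hri : r < i) (hrj : r < j) (hn : i + j - r ≤ n)
    {u : Equiv.Perm (Fin n)} (hu : IsBiGrPerm n i j r u) :
    ∀ a b : ℕ, a ≤ n →
      cornerSum (permMatrix u) a b
        = ((min (min a b) (r + (a - i) + (b - j)) : ℕ) : ℤ) := by
  intro a
  induction a with
  | zero =>
    intro b _
    rw [cornerSum_zero_row]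
    simp
  | succ m ih =>
    intro b hm
    rw [cornerSum_succ_row, ih b (by omega), rowPartial_perm]
    have hv : pval u (m + 1) = biGrFun i j r (m + 1) := hu (m + 1) (by omega) hm
    by_cases hb : biGrFun i j r (m + 1) ≤ b
    · rw [if_pos ⟨by omega, hm, by rw [hv]; exact hb⟩]
      have hkey : min (min (m + 1) b) (r + (m + 1 - i) + (b - j))
          = min (min m b) (r + (m - i) + (b - j)) + 1 := by
        simp only [biGrFun] at hb
        split_ifs at hb <;> omega
      rw [hkey]; push_cast; ring
    · rw [if_neg (by rw [hv]; tauto)]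
      have hkey : min (min (m + 1) b) (r + (m + 1 - i) + (b - j))
          = min (min m b) (r + (m - i) + (b - j)) := by
        simp only [biGrFun] at hb
        split_ifs at hb <;> omega
      rw [hkey]; ring

/-- Corner sum of a biGrassmannian permutation, all `a`. -/
lemma cs_biGr_all {i j r : ℕ} (hri : r < i) (hrj : r < j) (hn : i + j - r ≤ n)
    {u : Equiv.Perm (Fin n)} (hu : IsBiGrPerm n i j r u) (a b : ℕ) :
    cornerSum (permMatrix u) a b
      = ((min (min (min a n) b) (r + (min a n - i) + (b - j)) : ℕ) : ℤ) := by
  rcases le_or_gt a n with h | h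
  · rw [min_eq_left h]
    exact cs_biGr hri hrj hn hu a b h
  · have hmin : min a n = n := min_eq_right (by omega)
    rw [hmin, cornerSum_stab_row _ (by omega)]
    exact cs_biGr hri hrj hn hu n b le_rfl

end Perm

section BiGr

variable {n : ℕ}

lemma biGrFun_bounds (n : ℕ) {i j r : ℕ} (hri : r < i) (hrj : r < j) (hn : i + j - r ≤ n)
    (a : ℕ) (h1 : 1 ≤ a) (h2 : a ≤ n) :
    1 ≤ biGrFun i j r a ∧ biGrFun i j r a ≤ n := by
  simp only [biGrFun]; split_ifs <;> omega

lemma biGrFun_inv (n : ℕ) {i j r : ℕ} (hri : r < i) (hrj : r < j) (hn : i + j - r ≤ n)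
    (a : ℕ) (h1 : 1 ≤ a) (h2 : a ≤ n) :
    biGrFun j i r (biGrFun i j r a) = a := by
  simp only [biGrFun]; split_ifs <;> omega

/-- The explicit biGrassmannian permutation `[i,j,r]_b` as an element of `S_n`. -/
def biGrPerm (n : ℕ) {i j r : ℕ} (hri : r < i) (hrj : r < j) (hn : i + j - r ≤ n) :
    Equiv.Perm (Fin n) where
  toFun a := ⟨biGrFun i j r ((a : ℕ) + 1) - 1, by
    have h := biGrFun_bounds n hri hrj hn ((a : ℕ) + 1) (by omega) (by omega)
    omega⟩
  invFun a := ⟨biGrFun j i r ((a : ℕ) + 1) - 1, by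
    have h := biGrFun_bounds n hrj hri (by omega) ((a : ℕ) + 1) (by omega) (by omega)
    omega⟩
  left_inv := by
    intro a
    have hb := biGrFun_bounds n hri hrj hn ((a : ℕ) + 1) (by omega) (by omega)
    have hinv := biGrFun_inv n hri hrj hn ((a : ℕ) + 1) (by omega) (by omega)
    apply Fin.ext
    show biGrFun j i r (biGrFun i j r ((a : ℕ) + 1) - 1 + 1) - 1 = (a : ℕ)
    have h1 : biGrFun i j r ((a : ℕ) + 1) - 1 + 1 = biGrFun i j r ((a : ℕ) + 1) := by omega
    rw [h1, hinv]
    omega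
  right_inv := by
    intro a
    have hb := biGrFun_bounds n hrj hri (by omega) ((a : ℕ) + 1) (by omega) (by omega)
    have hinv := biGrFun_inv n hrj hri (by omega) ((a : ℕ) + 1) (by omega) (by omega)
    apply Fin.ext
    show biGrFun i j r (biGrFun j i r ((a : ℕ) + 1) - 1 + 1) - 1 = (a : ℕ)
    have h1 : biGrFun j i r ((a : ℕ) + 1) - 1 + 1 = biGrFun j i r ((a : ℕ) + 1) := by omega
    rw [h1, hinv]
    omega

lemma biGrPerm_isBiGrPerm {i j r : ℕ} (hri : r < i) (hrj : r < j) (hn : i + j - r ≤ n) :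
    IsBiGrPerm n i j r (biGrPerm n hri hrj hn) := by
  intro a h1 h2
  rw [pval_def _ h1 h2]
  show biGrFun i j r (a - 1 + 1) - 1 + 1 = biGrFun i j r a
  have h3 : a - 1 + 1 = a := by omega
  rw [h3]
  have hb := biGrFun_bounds n hri hrj hn a h1 h2
  omega

lemma isBiGrPerm_inv {i j r : ℕ} (hri : r < i) (hrj : r < j) (hn : i + j - r ≤ n)
    {u : Equiv.Perm (Fin n)} (hu : IsBiGrPerm n i j r u) :
    IsBiGrPerm n j i r u⁻¹ := by
  intro b h1 h2
  have hb := biGrFun_bounds n hrj hri (by omega) b h1 h2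
  have hval : pval u (biGrFun j i r b) = b := by
    rw [hu _ hb.1 hb.2, biGrFun_inv n hrj hri (by omega) b h1 h2]
  have := pval_inv_pval u hb.1 hb.2
  rw [hval] at this
  exact this

lemma uniqueDescent_of_biGrPerm {i j r : ℕ} (hri : r < i) (hrj : r < j)
    (hn : i + j - r ≤ n) {u : Equiv.Perm (Fin n)} (hu : IsBiGrPerm n i j r u) :
    ∃! d : ℕ, HasDescentAt u d := by
  refine ⟨i, ⟨by omega, by omega, ?_⟩, ?_⟩
  · rw [hu i (by omega) (by omega), hu (i + 1) (by omega) (by omega)]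
    simp only [biGrFun]
    split_ifs <;> omega
  · rintro d ⟨hd1, hd2, hd3⟩
    rw [hu d (by omega) (by omega), hu (d + 1) (by omega) (by omega)] at hd3
    simp only [biGrFun] at hd3
    split_ifs at hd3 <;> omega

lemma isBiGrassmannian_of_biGrPerm {i j r : ℕ} (hri : r < i) (hrj : r < j)
    (hn : i + j - r ≤ n) {u : Equiv.Perm (Fin n)} (hu : IsBiGrPerm n i j r u) :
    IsBiGrassmannian u :=
  ⟨uniqueDescent_of_biGrPerm hri hrj hn hu,
    uniqueDescent_of_biGrPerm hrj hri (by omega) (isBiGrPerm_inv hri hrj hn hu)⟩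

lemma eq_of_pval_eq {u v : Equiv.Perm (Fin n)}
    (h : ∀ a : ℕ, 1 ≤ a → a ≤ n → pval u a = pval v a) : u = v := by
  apply Equiv.ext
  intro x
  have hx := x.isLt
  have := h ((x : ℕ) + 1) (by omega) (by omega)
  rw [pval_def u (by omega) (by omega), pval_def v (by omega) (by omega)] at this
  have h2 : ((x : ℕ) + 1 - 1) = (x : ℕ) := by omega
  apply Fin.ext
  simp only [h2, Fin.eta] at this
  omega

end BiGr

section Diagram

variable {n : ℕ} {A : Matrix (Fin n) (Fin n) ℤ}

lemma rowPartial_eq_cs_sub (A : Matrix (Fin n) (Fin n) ℤ) {i : ℕ} (h : 1 ≤ i) (j : ℕ) :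
    rowPartial A i j = cornerSum A i j - cornerSum A (i - 1) j := by
  have := cornerSum_succ_row A (i - 1) j
  have h2 : i - 1 + 1 = i := by omega
  rw [h2] at this
  omega

lemma colPartial_eq_cs_sub (A : Matrix (Fin n) (Fin n) ℤ) (i : ℕ) {j : ℕ} (h : 1 ≤ j) :
    colPartial A i j = cornerSum A i j - cornerSum A i (j - 1) := by
  have := cornerSum_succ_col A i (j - 1)
  have h2 : j - 1 + 1 = j := by omega
  rw [h2] at this
  omega

lemma tail_row (A : Matrix (Fin n) (Fin n) ℤ) (i j : ℕ) :
    (∑ l ∈ Finset.Icc 1 n, if j < l then entry1 A i l else 0)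
      = rowPartial A i n - rowPartial A i j := by
  have hcongr : ∀ l ∈ Finset.Icc 1 n,
      (if j < l then entry1 A i l else 0)
        = entry1 A i l - (if l ≤ j then entry1 A i l else 0) := by
    intro l _
    split_ifs with h1 h2 h2 <;> first | omega | ring
  rw [Finset.sum_congr rfl hcongr, Finset.sum_sub_distrib, ← Finset.sum_filter]
  have hfil : Finset.filter (fun l => l ≤ j) (Finset.Icc 1 n) = Finset.Icc 1 (min j n) := by
    ext x
    simp only [Finset.mem_filter, Finset.mem_Icc]
    omega
  rw [hfil]
  have : (∑ l ∈ Finset.Icc 1 (min j n), entry1 A i l) = rowPartial A i j := by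
    rcases le_or_gt j n with h | h
    · rw [min_eq_left h]; rfl
    · rw [min_eq_right (by omega), rowPartial_stab A i (by omega)]; rfl
  rw [this]
  rfl

lemma tail_col (A : Matrix (Fin n) (Fin n) ℤ) (i j : ℕ) :
    (∑ k ∈ Finset.Icc 1 n, if i < k then entry1 A k j else 0)
      = colPartial A n j - colPartial A i j := by
  have hcongr : ∀ k ∈ Finset.Icc 1 n,
      (if i < k then entry1 A k j else 0)
        = entry1 A k j - (if k ≤ i then entry1 A k j else 0) := by
    intro k _
    split_ifs with h1 h2 h2 <;> first | omega | ring
  rw [Finset.sum_congr rfl hcongr, Finset.sum_sub_distrib, ← Finset.sum_filter]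
  have hfil : Finset.filter (fun k => k ≤ i) (Finset.Icc 1 n) = Finset.Icc 1 (min i n) := by
    ext x
    simp only [Finset.mem_filter, Finset.mem_Icc]
    omega
  rw [hfil]
  have : (∑ k ∈ Finset.Icc 1 (min i n), entry1 A k j) = colPartial A i j := by
    rcases le_or_gt i n with h | h
    · rw [min_eq_left h]; rfl
    · rw [min_eq_right (by omega), colPartial_stab A (by omega) j]; rfl
  rw [this]
  rfl

lemma inDiagram_prod (A : Matrix (Fin n) (Fin n) ℤ) (i j : ℕ) :
    InDiagram A i j ↔
      (rowPartial A i n - rowPartial A i j) * (colPartial A n j - colPartial A i j) = 1 := by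
  unfold InDiagram
  have hcongr : ∀ k ∈ Finset.Icc 1 n, ∀ l ∈ Finset.Icc 1 n,
      (if i < k ∧ j < l then entry1 A i l * entry1 A k j else 0)
        = (if j < l then entry1 A i l else 0) * (if i < k then entry1 A k j else 0) := by
    intro k _ l _
    split_ifs <;> first | tauto | ring
  have hsum : (∑ k ∈ Finset.Icc 1 n, ∑ l ∈ Finset.Icc 1 n,
      (if i < k ∧ j < l then entry1 A i l * entry1 A k j else 0))
      = (∑ l ∈ Finset.Icc 1 n, if j < l then entry1 A i l else 0)
        * (∑ k ∈ Finset.Icc 1 n, if i < k then entry1 A k j else 0) := by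
    rw [Finset.sum_congr rfl (fun k hk => Finset.sum_congr rfl (fun l hl => hcongr k hk l hl))]
    rw [Finset.sum_congr rfl (fun k _ => (Finset.sum_mul (Finset.Icc 1 n)
      (fun l => if j < l then entry1 A i l else 0) (if i < k then entry1 A k j else 0)).symm)]
    rw [← Finset.mul_sum]
  rw [hsum, tail_row, tail_col]

lemma inDiagram_iff (hA : IsASM A) (i j : ℕ) :
    InDiagram A i j ↔
      (1 ≤ i ∧ i ≤ n ∧ 1 ≤ j ∧ j ≤ n ∧ rowPartial A i j = 0 ∧ colPartial A i j = 0) := by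
  rw [inDiagram_prod]
  by_cases hi : 1 ≤ i ∧ i ≤ n
  · by_cases hj : 1 ≤ j ∧ j ≤ n
    · rw [hA.2.2.1 i hi.1 hi.2, hA.2.2.2 j hj.1 hj.2]
      rcases hA.1 i j with h1 | h1 <;> rcases hA.2.1 i j with h2 | h2 <;>
        rw [h1, h2] <;> norm_num <;> tauto
    · have h1 : colPartial A n j = 0 := colPartial_zero_of A n hj
      have h2 : colPartial A i j = 0 := colPartial_zero_of A i hj
      rw [h1, h2]
      norm_num
      tauto
  · have h1 : rowPartial A i n = 0 := rowPartial_zero_of A hi n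
    have h2 : rowPartial A i j = 0 := rowPartial_zero_of A hi j
    rw [h1, h2]
    norm_num
    tauto

end Diagram

section Classify

variable {n : ℕ}

/-- Number of values `≤ e` among the first `d` values of `u`. -/
def rcard (u : Equiv.Perm (Fin n)) (d e : ℕ) : ℕ :=
  ((Finset.Icc 1 d).filter (fun a => pval u a ≤ e)).card

lemma filter_downset_iff {m : ℕ} (P : ℕ → Prop) [DecidablePred P]
    (hdc : ∀ a a' : ℕ, 1 ≤ a → a ≤ a' → a' ≤ m → P a' → P a)
    {a : ℕ} (h1 : 1 ≤ a) (h2 : a ≤ m) :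
    P a ↔ a ≤ ((Finset.Icc 1 m).filter (fun x => P x)).card := by
  constructor
  · intro hPa
    have hsub : Finset.Icc 1 a ⊆ (Finset.Icc 1 m).filter (fun x => P x) := by
      intro x hx
      simp only [Finset.mem_Icc] at hx
      simp only [Finset.mem_filter, Finset.mem_Icc]
      exact ⟨⟨hx.1, by omega⟩, hdc x a hx.1 hx.2 h2 hPa⟩
    have := Finset.card_le_card hsub
    rw [Nat.card_Icc] at this
    omega
  · intro hle
    by_contra hPa
    have hsub : (Finset.Icc 1 m).filter (fun x => P x) ⊆ Finset.Icc 1 (a - 1) := by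
      intro x hx
      simp only [Finset.mem_filter, Finset.mem_Icc] at hx
      simp only [Finset.mem_Icc]
      refine ⟨hx.1.1, ?_⟩
      by_contra hxa
      exact hPa (hdc a x h1 (by omega) hx.1.2 hx.2)
    have := Finset.card_le_card hsub
    rw [Nat.card_Icc] at this
    omega

lemma rcard_symm (u : Equiv.Perm (Fin n)) {d e : ℕ} (hd : d ≤ n) (he : e ≤ n) :
    rcard u d e = rcard u⁻¹ e d := by
  unfold rcard
  refine Finset.card_bij' (fun a _ => pval u a) (fun b _ => pval u⁻¹ b) ?_ ?_ ?_ ?_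
  · intro a ha
    simp only [Finset.mem_filter, Finset.mem_Icc] at ha ⊢
    have hb := pval_bounds u ha.1.1 (by omega)
    exact ⟨⟨hb.1, ha.2⟩, by rw [pval_inv_pval u ha.1.1 (by omega)]; exact ha.1.2⟩
  · intro b hb
    simp only [Finset.mem_filter, Finset.mem_Icc] at hb ⊢
    have hbb := pval_bounds u⁻¹ hb.1.1 (by omega)
    exact ⟨⟨hbb.1, hb.2⟩, by rw [pval_pval_inv u hb.1.1 (by omega)]; exact hb.1.2⟩
  · intro a ha
    simp only [Finset.mem_filter, Finset.mem_Icc] at ha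
    exact pval_inv_pval u ha.1.1 (by omega)
  · intro b hb
    simp only [Finset.mem_filter, Finset.mem_Icc] at hb
    exact pval_pval_inv u hb.1.1 (by omega)

lemma pval_lt_succ {u : Equiv.Perm (Fin n)} {d : ℕ} (hdu : ∀ y, HasDescentAt u y → y = d)
    {a : ℕ} (h1 : 1 ≤ a) (h2 : a < n) (h3 : a ≠ d) : pval u a < pval u (a + 1) := by
  rcases Nat.lt_trichotomy (pval u a) (pval u (a + 1)) with h | h | h
  · exact h
  · exact absurd (pval_injOn u h1 (by omega) (by omega) (by omega) h) (by omega)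
  · exact absurd (hdu a ⟨h1, h2, h⟩) h3

lemma pval_block_lt {u : Equiv.Perm (Fin n)} {d : ℕ} (hdu : ∀ y, HasDescentAt u y → y = d)
    {a a' : ℕ} (h1 : 1 ≤ a) (hlt : a < a') (h2 : a' ≤ n)
    (hblock : d < a ∨ a' ≤ d) : pval u a < pval u a' := by
  induction a' with
  | zero => omega
  | succ m ih =>
    rcases Nat.lt_or_ge a m with hm | hm
    · have hstep := pval_lt_succ hdu (show 1 ≤ m by omega) (show m < n by omega)
        (show m ≠ d by omega)
      have := ih (by omega) (by omega) (by omega)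
      omega
    · have ha : a = m := by omega
      subst ha
      exact pval_lt_succ hdu h1 (by omega) (by omega)

lemma pval_block_ge {u : Equiv.Perm (Fin n)} {d : ℕ} (hdu : ∀ y, HasDescentAt u y → y = d)
    {s a : ℕ} (h1 : 1 ≤ s) (hsa : s ≤ a) (h2 : a ≤ n)
    (hblock : d < s ∨ a ≤ d) : pval u s + (a - s) ≤ pval u a := by
  induction a with
  | zero => omega
  | succ m ih =>
    rcases Nat.lt_or_ge s (m + 1) with hm | hm
    · have hstep := pval_lt_succ hdu (show 1 ≤ m by omega) (show m < n by omega)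
        (show m ≠ d by omega)
      have := ih (by omega) (by omega) (by omega)
      omega
    · have hs : s = m + 1 := by omega
      subst hs
      omega

lemma classify_half {u : Equiv.Perm (Fin n)} {d e : ℕ}
    (hd : HasDescentAt u d) (hdu : ∀ y, HasDescentAt u y → y = d)
    (he : HasDescentAt u⁻¹ e) (heu : ∀ y, HasDescentAt u⁻¹ y → y = e) :
    rcard u d e < d ∧ rcard u d e < e ∧
    (∀ a, 1 ≤ a → a ≤ rcard u d e → pval u a = a) ∧
    (∀ a, rcard u d e < a → a ≤ d → pval u a = a + (e - rcard u d e)) := by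
  obtain ⟨hd1, hd2, hd3⟩ := hd
  obtain ⟨he1, he2, he3⟩ := he
  set r := rcard u d e with hr
  have hrowdc : ∀ a a' : ℕ, 1 ≤ a → a ≤ a' → a' ≤ d → (pval u a' ≤ e) → pval u a ≤ e := by
    intro a a' h1 h2 h3 h4
    rcases Nat.eq_or_lt_of_le h2 with h | h
    · rw [h]; exact h4
    · exact le_trans (le_of_lt (pval_block_lt hdu h1 h (by omega) (Or.inr h3))) h4
  have hrow : ∀ a, 1 ≤ a → a ≤ d → (pval u a ≤ e ↔ a ≤ r) := fun a h1 h2 =>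
    filter_downset_iff (fun x => pval u x ≤ e) hrowdc h1 h2
  have hcoldc : ∀ b b' : ℕ, 1 ≤ b → b ≤ b' → b' ≤ e → (pval u⁻¹ b' ≤ d) → pval u⁻¹ b ≤ d := by
    intro b b' h1 h2 h3 h4
    rcases Nat.eq_or_lt_of_le h2 with h | h
    · rw [h]; exact h4
    · exact le_trans (le_of_lt (pval_block_lt heu h1 h (by omega) (Or.inr h3))) h4
  have hrr : rcard u⁻¹ e d = r := (rcard_symm u (by omega) (by omega)).symm
  have hcol : ∀ b, 1 ≤ b → b ≤ e → (pval u⁻¹ b ≤ d ↔ b ≤ r) := by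
    intro b h1 h2
    rw [← hrr]
    exact filter_downset_iff (fun x => pval u⁻¹ x ≤ d) hcoldc h1 h2
  have hrd : r ≤ d := by
    rw [hr]
    unfold rcard
    have := Finset.card_filter_le (Finset.Icc 1 d) (fun a => pval u a ≤ e)
    rw [Nat.card_Icc] at this
    omega
  have hre : r ≤ e := by
    have h2 : rcard u⁻¹ e d ≤ e := by
      unfold rcard
      have := Finset.card_filter_le (Finset.Icc 1 e) (fun b => pval u⁻¹ b ≤ d)
      rw [Nat.card_Icc] at this
      omega
    omega
  -- r < d
  have hF5 : r < d := by
    rcases Nat.eq_or_lt_of_le hrd with h | h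
    · exfalso
      have hpd : pval u d ≤ e := (hrow d hd1 le_rfl).mpr (by omega)
      have hpd1 : pval u (d + 1) ≤ e := by omega
      have hb1 := pval_bounds u hd1 (by omega)
      have hb2 := pval_bounds u (show 1 ≤ d + 1 by omega) (show d + 1 ≤ n by omega)
      -- position of pval u d is d ≤ d, so pval u d ≤ r = d
      have h1 : pval u d ≤ r := by
        have := (hcol (pval u d) hb1.1 hpd).mp (by rw [pval_inv_pval u hd1 (by omega)])
        exact this
      -- position of pval u (d+1) is d+1 > d, so pval u (d+1) > r = d
      have h2 : ¬ pval u (d + 1) ≤ r := by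
        intro hc
        have := (hcol (pval u (d + 1)) hb2.1 hpd1).mpr hc
        rw [pval_inv_pval u (show 1 ≤ d + 1 by omega) (by omega)] at this
        omega
      omega
    · exact h
  -- r < e
  have hF6 : r < e := by
    rcases Nat.eq_or_lt_of_le hre with h | h
    · exfalso
      have hpe : pval u⁻¹ e ≤ d := (hcol e he1 le_rfl).mpr (by omega)
      have hbe := pval_bounds u⁻¹ he1 (by omega)
      have hbe1 := pval_bounds u⁻¹ (show 1 ≤ e + 1 by omega) (show e + 1 ≤ n by omega)
      -- pval u⁻¹ e ≤ r (its value under u is e ≤ e)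
      have h1 : pval u⁻¹ e ≤ r := by
        have := (hrow (pval u⁻¹ e) hbe.1 hpe).mp
          (by rw [pval_pval_inv u he1 (by omega)])
        exact this
      -- a0 := pval u⁻¹ (e+1) < pval u⁻¹ e ≤ d, value e+1 > e, so a0 > r
      have h2 : ¬ pval u⁻¹ (e + 1) ≤ r := by
        intro hc
        have := (hrow (pval u⁻¹ (e + 1)) hbe1.1 (by omega)).mpr hc
        rw [pval_pval_inv u (show 1 ≤ e + 1 by omega) (by omega)] at this
        omega
      omega
    · exact h
  have hn2 : 2 ≤ n := by omega
  -- V1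
  have hV1 : ∀ a, 1 ≤ a → a ≤ r → pval u a = a := by
    have hmap : ∀ a, 1 ≤ a → a ≤ r → pval u a ≤ r := by
      intro a h1 h2
      have hae : pval u a ≤ e := (hrow a h1 (by omega)).mpr h2
      have hab := pval_bounds u h1 (by omega)
      exact (hcol (pval u a) hab.1 hae).mp
        (by rw [pval_inv_pval u h1 (by omega)]; omega)
    have hmapi : ∀ b, 1 ≤ b → b ≤ r → pval u⁻¹ b ≤ r := by
      intro b h1 h2
      have hbd : pval u⁻¹ b ≤ d := (hcol b h1 (by omega)).mpr h2
      have hbb := pval_bounds u⁻¹ h1 (by omega)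
      exact (hrow (pval u⁻¹ b) hbb.1 hbd).mp
        (by rw [pval_pval_inv u h1 (by omega)]; omega)
    intro a h1 h2
    have hge : a ≤ pval u a := by
      have hbase := pval_bounds u (le_refl 1) (by omega)
      have := pval_block_ge hdu (le_refl 1) h1 (by omega) (Or.inr (by omega))
      omega
    have hgei : pval u a ≤ pval u⁻¹ (pval u a) := by
      have hbase := pval_bounds u⁻¹ (le_refl 1) (by omega)
      have hab := pval_bounds u h1 (by omega)
      have := pval_block_ge heu (le_refl 1) hab.1 (by omega)
        (Or.inr (by have := hmap a h1 h2; omega))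
      omega
    rw [pval_inv_pval u h1 (by omega)] at hgei
    omega
  -- V2
  have hV2 : ∀ a, r < a → a ≤ d → pval u a = a + (e - r) := by
    intro a ha1 ha2
    have hgt : e < pval u a := by have := hrow a (by omega) ha2; omega
    have hab := pval_bounds u (show 1 ≤ a by omega) (by omega)
    have hlow : e + (a - r) ≤ pval u a := by
      have hbase : e + 1 ≤ pval u (r + 1) := by
        have := hrow (r + 1) (by omega) (by omega)
        omega
      have := pval_block_ge hdu (show 1 ≤ r + 1 by omega) (show r + 1 ≤ a by omega)
        (by omega) (Or.inr ha2)
      omega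
    have hbase2 : r + 1 ≤ pval u⁻¹ (e + 1) := by
      by_contra hcon
      push_neg at hcon
      have hbe1 := pval_bounds u⁻¹ (show 1 ≤ e + 1 by omega) (show e + 1 ≤ n by omega)
      have := hV1 (pval u⁻¹ (e + 1)) hbe1.1 (by omega)
      have h2 := pval_pval_inv u (show 1 ≤ e + 1 by omega) (show e + 1 ≤ n by omega)
      rw [this] at h2
      omega
    have hupper := pval_block_ge heu (show 1 ≤ e + 1 by omega)
      (show e + 1 ≤ pval u a by omega) (by omega) (Or.inl (by omega))
    rw [pval_inv_pval u (by omega) (by omega)] at hupper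
    omega
  exact ⟨hF5, hF6, hV1, hV2⟩

lemma tail_big {u : Equiv.Perm (Fin n)} {d e r : ℕ} (hrd : r < d) (hre : r < e)
    (hn : d + (e - r) ≤ n)
    (hV2 : ∀ a, r < a → a ≤ d → pval u a = a + (e - r))
    (hV1' : ∀ b, 1 ≤ b → b ≤ r → pval u⁻¹ b = b)
    (hV2' : ∀ b, r < b → b ≤ e → pval u⁻¹ b = b + (d - r)) :
    ∀ x, d + (e - r) < x → x ≤ n → e + (d - r) < pval u x := by
  intro x hx1 hx2
  by_contra hcon
  push_neg at hcon
  have hxb := pval_bounds u (show 1 ≤ x by omega) hx2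
  have hxinv := pval_inv_pval u (show 1 ≤ x by omega) hx2
  rcases le_or_gt (pval u x) e with hc | hc
  · rcases le_or_gt (pval u x) r with hbr | hbr
    · have := hV1' (pval u x) hxb.1 hbr
      omega
    · have := hV2' (pval u x) hbr hc
      omega
  · -- e < pval u x ≤ e + (d - r) : value is pval u (r + t)
    set b := pval u x with hbdef
    have hVa := hV2 (b - e + r) (by omega) (by omega)
    have hVb : pval u (b - e + r) = b := by rw [hVa]; omega
    have := pval_inv_pval u (show 1 ≤ b - e + r by omega) (show b - e + r ≤ n by omega)
    rw [hVb] at this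
    omega

/-- Classification: a biGrassmannian permutation is some `[i,j,r]_b`. -/
lemma classify {u : Equiv.Perm (Fin n)} (hbg : IsBiGrassmannian u) :
    ∃ i j r : ℕ, r < i ∧ r < j ∧ i + j - r ≤ n ∧ IsBiGrPerm n i j r u := by
  obtain ⟨⟨d, hd, hdu⟩, ⟨e, he, heu⟩⟩ := hbg
  have hd' := hd
  obtain ⟨hd1, hd2, _⟩ := hd'
  have he' := he
  obtain ⟨he1, he2, _⟩ := he'
  have hduinv : ∀ y, HasDescentAt u⁻¹⁻¹ y → y = d := by
    simp only [inv_inv]; exact hdu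
  have hdinv : HasDescentAt u⁻¹⁻¹ d := by simp only [inv_inv]; exact hd
  have hH := classify_half hd hdu he heu
  have hH' := classify_half he heu hdinv hduinv
  have hrr : rcard u⁻¹ e d = rcard u d e := (rcard_symm u (by omega) (by omega)).symm
  rw [hrr] at hH'
  set r := rcard u d e with hrdef
  obtain ⟨hF5, hF6, hV1, hV2⟩ := hH
  obtain ⟨_, _, hV1', hV2'⟩ := hH'
  -- d + e - r ≤ n
  have hvd := hV2 d hF5 le_rfl
  have hvdb := pval_bounds u hd1 (by omega)
  have hn : d + (e - r) ≤ n := by omega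
  refine ⟨d, e, r, hF5, hF6, by omega, ?_⟩
  have hW := tail_big hF5 hF6 hn hV2 hV1' hV2'
  have hW' := tail_big (u := u⁻¹) hF6 hF5 (by omega) hV2'
    (by simp only [inv_inv]; exact hV1) (by simp only [inv_inv]; exact hV2)
  intro a h1 h2
  simp only [biGrFun]
  by_cases c1 : a ≤ r
  · rw [if_pos c1]
    exact hV1 a h1 c1
  · rw [if_neg c1]
    by_cases c2 : a ≤ d
    · rw [if_pos c2]
      exact hV2 a (by omega) c2
    · rw [if_neg c2]
      by_cases c3 : a ≤ d + e - r
      · rw [if_pos c3]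
        have hb' := hV2' (a - d + r) (by omega) (by omega)
        have heq : pval u⁻¹ (a - d + r) = a := by rw [hb']; omega
        have := pval_pval_inv u (show 1 ≤ a - d + r by omega)
          (show a - d + r ≤ n by omega)
        rw [heq] at this
        rw [this]
        omega
      · rw [if_neg c3]
        -- a > d + e - r : pval u a = a
        have hs : d + (e - r) < a := by omega
        have hWa := hW a hs h2
        have hab := pval_bounds u h1 h2
        -- pval u a ≥ a via block monotonicity from s₀ := d + (e-r) + 1
        have hbase := hW (d + (e - r) + 1) (by omega) (by omega)
        have hgea : a ≤ pval u a := by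
          have := pval_block_ge hdu (show 1 ≤ d + (e - r) + 1 by omega)
            (show d + (e - r) + 1 ≤ a by omega) h2 (Or.inl (by omega))
          omega
        have hWb := hW' (pval u a) (by omega) (by omega)
        have hbase' := hW' (e + (d - r) + 1) (by omega) (by omega)
        have hgeb : pval u a ≤ pval u⁻¹ (pval u a) := by
          have := pval_block_ge heu (show 1 ≤ e + (d - r) + 1 by omega)
            (show e + (d - r) + 1 ≤ pval u a by omega) (by omega) (Or.inl (by omega))
          omega
        rw [pval_inv_pval u h1 h2] at hgeb
        omega

end Classify

section Main

variable {n : ℕ} {A : Matrix (Fin n) (Fin n) ℤ}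

/-- A biGrassmannian `[i,j,r]_b` is `≤ A` iff `r_A(i,j) ≤ r` (easy direction). -/
lemma permLE_of (hA : IsASM A) {i j r : ℕ} (hri : r < i) (hrj : r < j)
    (hn : i + j - r ≤ n) {u : Equiv.Perm (Fin n)} (hu : IsBiGrPerm n i j r u)
    (hle : cornerSum A i j ≤ (r : ℤ)) : PermLEASM u A := by
  intro a b
  rw [cs_biGr_all hri hrj hn hu]
  have hb1 : cornerSum A a b ≤ ((min a n : ℕ) : ℤ) := by
    rcases le_or_gt a n with h | h
    · rw [min_eq_left h]; exact cs_le_row hA.1 a b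
    · rw [min_eq_right (by omega), cornerSum_stab_row A (by omega) b]
      exact cs_le_row hA.1 n b
  have hb2 : cornerSum A a b ≤ (b : ℤ) := cs_le_col hA.2.1 a b
  have hb3 : cornerSum A a b ≤ (r : ℤ) + ((min a n - i : ℕ) : ℤ) + ((b - j : ℕ) : ℤ) := by
    have hstab : cornerSum A a b = cornerSum A (min a n) b := by
      rcases le_or_gt a n with h | h
      · rw [min_eq_left h]
      · rw [min_eq_right (by omega)]; exact cornerSum_stab_row A (by omega) b
    have := cs_lip hA.1 hA.2.1 (min a n) b i j
    omega
  omega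

/-- Corner sum of `[i,j,r]_b` at the corner `(i,j)` is exactly `r`. -/
lemma biGr_corner {i j r : ℕ} (hri : r < i) (hrj : r < j) (hn : i + j - r ≤ n)
    {u : Equiv.Perm (Fin n)} (hu : IsBiGrPerm n i j r u) :
    cornerSum (permMatrix u) i j = (r : ℤ) := by
  rw [cs_biGr_all hri hrj hn hu]
  have hmin : min (min (min i n) j) (r + (min i n - i) + (j - j)) = r := by omega
  rw [hmin]

/-- Bruhat comparison of two biGrassmannians via the corner-sum formulas. -/
lemma bruhatLE_of {i j r i' j' r' : ℕ} (hri : r < i) (hrj : r < j) (hn : i + j - r ≤ n)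
    (hri' : r' < i') (hrj' : r' < j') (hn' : i' + j' - r' ≤ n)
    {u v : Equiv.Perm (Fin n)} (hu : IsBiGrPerm n i j r u) (hv : IsBiGrPerm n i' j' r' v)
    (hcond : ∀ a b : ℕ, a ≤ n →
      min (min a b) (r' + (a - i') + (b - j')) ≤ min (min a b) (r + (a - i) + (b - j))) :
    BruhatLE u v := by
  intro a b
  rw [cs_biGr_all hri hrj hn hu, cs_biGr_all hri' hrj' hn' hv]
  have := hcond (min a n) b (min_le_right a n)
  have hmm : min (min a n) n = min a n := by omega
  omega

/-- Parameter bounds at a cell of the Rothe diagram. -/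
lemma ess_bounds (hA : IsASM A) {i j : ℕ} (hD : InDiagram A i j) :
    1 ≤ i ∧ i ≤ n ∧ 1 ≤ j ∧ j ≤ n ∧
    cornerSum A i j = ((cornerSum A i j).toNat : ℤ) ∧
    (cornerSum A i j).toNat < i ∧ (cornerSum A i j).toNat < j ∧
    i + j - (cornerSum A i j).toNat ≤ n := by
  obtain ⟨hi1, hi2, hj1, hj2, hrp, hcp⟩ := (inDiagram_iff hA i j).mp hD
  have h0 := cs_nonneg hA.1 i j
  have hcast : cornerSum A i j = ((cornerSum A i j).toNat : ℤ) := by omega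
  have hrow := rowPartial_eq_cs_sub A hi1 j
  have hcol := colPartial_eq_cs_sub A i hj1
  have hr1 : cornerSum A (i - 1) j ≤ ((i - 1 : ℕ) : ℤ) := cs_le_row hA.1 _ _
  have hc1 : cornerSum A i (j - 1) ≤ ((j - 1 : ℕ) : ℤ) := cs_le_col hA.2.1 _ _
  have hlow := cs_lower hA hi2 hj2
  refine ⟨hi1, hi2, hj1, hj2, hcast, by omega, by omega, by omega⟩

end Main

set_option maxHeartbeats 3200000 in
/-- For `A ∈ ASM(n)`, the set `biGr(A)` of maximal elements (in
Bruhat order) of the set of biGrassmannian permutations `u ≤ A` equals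
`{[i, j, r_A(i,j)]_b : (i,j) ∈ Ess(A)}`. -/
theorem stmt7 {n : ℕ} (A : Matrix (Fin n) (Fin n) ℤ) (hA : IsASM A) :
    {u : Equiv.Perm (Fin n) |
      (IsBiGrassmannian u ∧ PermLEASM u A) ∧
      ∀ v : Equiv.Perm (Fin n),
        (IsBiGrassmannian v ∧ PermLEASM v A) → BruhatLE u v → v = u}
    = {u : Equiv.Perm (Fin n) |
        ∃ i j : ℕ, InEss A i j ∧
          IsBiGrPerm n i j (cornerSum A i j).toNat u} := by
  ext u
  simp only [Set.mem_setOf_eq]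
  constructor
  · rintro ⟨⟨hbg, hle⟩, hmax⟩
    obtain ⟨i, j, r, hri, hrj, hn, hu⟩ := classify hbg
    have hi2 : i ≤ n := by omega
    have hj2 : j ≤ n := by omega
    have hcs_le : cornerSum A i j ≤ (r : ℤ) := by
      have := hle i j
      rw [biGr_corner hri hrj hn hu] at this
      exact this
    have h0 := cs_nonneg hA.1 i j
    have hcompete : ∀ i' j' r' : ℕ,
        ∀ (hvri : r' < i') (hvrj : r' < j') (hvn : i' + j' - r' ≤ n),
        cornerSum A i' j' ≤ (r' : ℤ) →
        (∀ a b : ℕ, a ≤ n →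
          min (min a b) (r' + (a - i') + (b - j')) ≤ min (min a b) (r + (a - i) + (b - j))) →
        IsBiGrPerm n i' j' r' u := by
      intro i' j' r' hvri hvrj hvn hcs hcond
      have hv := biGrPerm_isBiGrPerm (n := n) hvri hvrj hvn
      have heq := hmax (biGrPerm n hvri hvrj hvn)
        ⟨isBiGrassmannian_of_biGrPerm hvri hvrj hvn hv, permLE_of hA hvri hvrj hvn hv hcs⟩
        (bruhatLE_of hri hrj hn hvri hvrj hvn hu hv hcond)
      rw [← heq]
      exact hv
    have hlow := cs_lower hA hi2 hj2
    -- Step 1 : r_A(i,j) = r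
    have hstep1 : cornerSum A i j = (r : ℤ) := by
      by_contra hne
      have hlt : cornerSum A i j < (r : ℤ) := by omega
      set ρ : ℕ := (cornerSum A i j).toNat with hρ
      have hρc : cornerSum A i j = (ρ : ℤ) := by omega
      have hu' := hcompete i j ρ (by omega) (by omega) (by omega) (by omega)
        (fun a b _ => by omega)
      have e1 := hu i (by omega) hi2
      have e2 := hu' i (by omega) hi2
      simp only [biGrFun] at e1 e2
      split_ifs at e1 e2 <;> omega
    -- Step 2 : rowPartial A i j = 0
    have hrow := rowPartial_eq_cs_sub A (show 1 ≤ i by omega) j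
    have h0r := cs_nonneg hA.1 (i - 1) j
    have hstep2 : rowPartial A i j = 0 := by
      rcases hA.1 i j with h | h
      · exact h
      · exfalso
        have hcs1 : cornerSum A (i - 1) j = ((r - 1 : ℕ) : ℤ) := by omega
        have hu2 := hcompete (i - 1) j (r - 1) (by omega) (by omega) (by omega)
          (by omega) (fun a b _ => by omega)
        have e1 := hu i (by omega) hi2
        have e2 := hu2 i (by omega) hi2
        simp only [biGrFun] at e1 e2
        split_ifs at e1 e2 <;> omega
    -- Step 3 : colPartial A i j = 0
    have hcol := colPartial_eq_cs_sub A i (show 1 ≤ j by omega)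
    have h0c := cs_nonneg hA.1 i (j - 1)
    have hstep3 : colPartial A i j = 0 := by
      rcases hA.2.1 i j with h | h
      · exact h
      · exfalso
        have hcs1 : cornerSum A i (j - 1) = ((r - 1 : ℕ) : ℤ) := by omega
        have hu2 := hcompete i (j - 1) (r - 1) (by omega) (by omega) (by omega)
          (by omega) (fun a b _ => by omega)
        have e1 := hu r (by omega) (by omega)
        have e2 := hu2 r (by omega) (by omega)
        simp only [biGrFun] at e1 e2
        split_ifs at e1 e2 <;> omega
    have hD : InDiagram A i j :=
      (inDiagram_iff hA i j).mpr ⟨by omega, hi2, by omega, hj2, hstep2, hstep3⟩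
    -- Step 4 : (i+1, j) not in the diagram
    have hstep4 : ¬ InDiagram A (i + 1) j := by
      intro hD'
      obtain ⟨_, hi2', _, _, hrp', hcp'⟩ := (inDiagram_iff hA (i + 1) j).mp hD'
      have hrow' := rowPartial_eq_cs_sub A (show 1 ≤ i + 1 by omega) j
      have hlow' := cs_lower hA hi2' hj2
      have hcseq : cornerSum A (i + 1) j = (r : ℤ) := by
        have h5 : i + 1 - 1 = i := by omega
        rw [h5] at hrow'
        omega
      have hu3 := hcompete (i + 1) j r (by omega) (by omega) (by omega) (by omega)
        (fun a b _ => by omega)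
      have e1 := hu (i + 1) (by omega) hi2'
      have e2 := hu3 (i + 1) (by omega) hi2'
      simp only [biGrFun] at e1 e2
      split_ifs at e1 e2 <;> omega
    -- Step 5 : (i, j+1) not in the diagram
    have hstep5 : ¬ InDiagram A i (j + 1) := by
      intro hD'
      obtain ⟨_, _, _, hj2', hrp', hcp'⟩ := (inDiagram_iff hA i (j + 1)).mp hD'
      have hcol' := colPartial_eq_cs_sub A i (show 1 ≤ j + 1 by omega)
      have hlow' := cs_lower hA hi2 hj2'
      have hcseq : cornerSum A i (j + 1) = (r : ℤ) := by
        have h5 : j + 1 - 1 = j := by omega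
        rw [h5] at hcol'
        omega
      have hu4 := hcompete i (j + 1) r (by omega) (by omega) (by omega) (by omega)
        (fun a b _ => by omega)
      have e1 := hu i (by omega) hi2
      have e2 := hu4 i (by omega) hi2
      simp only [biGrFun] at e1 e2
      split_ifs at e1 e2 <;> omega
    refine ⟨i, j, ⟨hD, hstep4, hstep5⟩, ?_⟩
    have htn : (cornerSum A i j).toNat = r := by omega
    rw [htn]
    exact hu
  · rintro ⟨i, j, hEss, hu⟩
    obtain ⟨hD, hD2, hD3⟩ := hEss
    obtain ⟨hi1, hi2, hj1, hj2, hcast, hri, hrj, hn⟩ := ess_bounds hA hD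
    set r : ℕ := (cornerSum A i j).toNat with hr
    obtain ⟨_, _, _, _, hrp, hcp⟩ := (inDiagram_iff hA i j).mp hD
    have hrow := rowPartial_eq_cs_sub A hi1 j
    have hcol := colPartial_eq_cs_sub A i hj1
    refine ⟨⟨isBiGrassmannian_of_biGrPerm hri hrj hn hu,
      permLE_of hA hri hrj hn hu (by omega)⟩, ?_⟩
    rintro v ⟨hvbg, hvle⟩ hbl
    obtain ⟨i', j', r', hri', hrj', hn', hv⟩ := classify hvbg
    have hi2' : i' ≤ n := by omega
    have hj2' : j' ≤ n := by omega
    have h1 : cornerSum A i' j' ≤ (r' : ℤ) := by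
      have := hvle i' j'
      rw [biGr_corner hri' hrj' hn' hv] at this
      exact this
    have hkey : ((min (min i j) (r' + (i - i') + (j - j')) : ℕ) : ℤ) ≤ (r : ℤ) := by
      have hb := hbl i j
      rw [biGr_corner hri hrj hn hu, cs_biGr_all hri' hrj' hn' hv] at hb
      have hmin : min i n = i := min_eq_left hi2
      rw [hmin] at hb
      exact hb
    have hkeyN : r' + (i - i') + (j - j') ≤ r := by omega
    have hii : i ≤ i' := by
      by_contra hlt
      push_neg at hlt
      have hl2 := cs_lip hA.1 hA.2.1 (i - 1) j i' j'
      omega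
    have hjj : j ≤ j' := by
      by_contra hlt
      push_neg at hlt
      have hl2 := cs_lip hA.1 hA.2.1 i (j - 1) i' j'
      omega
    have hmono : cornerSum A i j ≤ cornerSum A i' j' :=
      le_trans (cs_mono_row hA.1 hii j) (cs_mono_col hA.2.1 i' hjj)
    have hr' : r' = r := by omega
    have hcs' : cornerSum A i' j' = (r : ℤ) := by omega
    have hieq : i' = i := by
      by_contra hne
      have hlt : i < i' := by omega
      apply hD2
      have hm1 : cornerSum A i j ≤ cornerSum A (i + 1) j := cs_mono_row hA.1 (by omega) j
      have hm2 : cornerSum A (i + 1) j ≤ cornerSum A i' j' :=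
        le_trans (cs_mono_row hA.1 (by omega) j) (cs_mono_col hA.2.1 i' hjj)
      have hm3 : cornerSum A i (j - 1) ≤ cornerSum A (i + 1) (j - 1) :=
        cs_mono_row hA.1 (by omega) _
      have hm4 : cornerSum A (i + 1) (j - 1) ≤ cornerSum A (i + 1) j :=
        cs_mono_col hA.2.1 _ (by omega)
      refine (inDiagram_iff hA (i + 1) j).mpr ⟨by omega, by omega, hj1, hj2, ?_, ?_⟩
      · have h6 := rowPartial_eq_cs_sub A (show 1 ≤ i + 1 by omega) j
        have h5 : i + 1 - 1 = i := by omega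
        rw [h5] at h6
        omega
      · have h6 := colPartial_eq_cs_sub A (i + 1) hj1
        omega
    have hjeq : j' = j := by
      by_contra hne
      have hlt : j < j' := by omega
      apply hD3
      have hm1 : cornerSum A i j ≤ cornerSum A i (j + 1) := cs_mono_col hA.2.1 i (by omega)
      have hm2 : cornerSum A i (j + 1) ≤ cornerSum A i' j' :=
        le_trans (cs_mono_row hA.1 hii (j + 1)) (cs_mono_col hA.2.1 i' (by omega))
      have hm3 : cornerSum A (i - 1) j ≤ cornerSum A (i - 1) (j + 1) :=
        cs_mono_col hA.2.1 _ (by omega)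
      have hm4 : cornerSum A (i - 1) (j + 1) ≤ cornerSum A i (j + 1) :=
        cs_mono_row hA.1 (by omega) _
      refine (inDiagram_iff hA i (j + 1)).mpr ⟨hi1, hi2, by omega, by omega, ?_, ?_⟩
      · have h6 := rowPartial_eq_cs_sub A hi1 (j + 1)
        omega
      · have h6 := colPartial_eq_cs_sub A i (show 1 ≤ j + 1 by omega)
        have h5 : j + 1 - 1 = j := by omega
        rw [h5] at h6
        omega
    apply eq_of_pval_eq
    intro a h1a h2a
    rw [hv a h1a h2a, hu a h1a h2a, hieq, hjeq, hr']
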